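/- Let (X,d) be a metric space and T : X → X a map such that for some k ∈ ℕ and some q ∈ (0,1) the k-th iterate T^k is a q-contraction of (X,d). Define d_k(x,y) := d(x,y) + q^{-1/k} d(Tx,Ty) + ⋯ + q^{-(k-1)/k} d(T^{k-1}x,T^{k-1}y). Then d_k is a metric on X and T is a q^{1/k}-contraction of (X,d_k), i.e. d_k(Tx,Ty) ≤ q^{1/k} d_k(x,y) for all x,y ∈ X. -/

import Mathlib

/-- The Bielecki-type renormed distance
`d_k(x,y) := ∑_{j=0}^{k-1} q^{-j/k} d(T^j x, T^j y)`. -/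
noncomputable def bieleckiDist {X : Type*} [MetricSpace X] (T : X → X) (k : ℕ) (q : ℝ)
    (x y : X) : ℝ :=
  ∑ j ∈ Finset.range k, q ^ (-(j : ℝ) / (k : ℝ)) * dist (T^[j] x) (T^[j] y)

/-- If some iterate `T^k` of `T : X → X` is a `q`-contraction of the metric space `(X,d)`
with `0 < q < 1`, then `d_k` is a metric on `X` and `T` is a `q^(1/k)`-contraction of
`(X, d_k)`. -/
theorem bielecki_renorming {X : Type*} [MetricSpace X] (T : X → X) (k : ℕ) (hk : 1 ≤ k)
    (q : ℝ) (hq0 : 0 < q) (hq1 : q < 1)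
    (hcontr : ∀ x y : X, dist (T^[k] x) (T^[k] y) ≤ q * dist x y) :
    (∀ x y : X, bieleckiDist T k q x y = 0 ↔ x = y) ∧
    (∀ x y : X, bieleckiDist T k q x y = bieleckiDist T k q y x) ∧
    (∀ x y z : X, bieleckiDist T k q x z ≤ bieleckiDist T k q x y + bieleckiDist T k q y z) ∧
    (∀ x y : X, bieleckiDist T k q (T x) (T y) ≤ q ^ ((1 : ℝ) / (k : ℝ)) * bieleckiDist T k q x y) := by
  have hkR : (k : ℝ) ≠ 0 := by
    exact_mod_cast (Nat.one_le_iff_ne_zero.mp hk)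
  refine ⟨?_, ?_, ?_, ?_⟩
  · intro x y
    constructor
    · intro h
      have hnn : ∀ j ∈ Finset.range k,
          0 ≤ q ^ (-(j : ℝ) / (k : ℝ)) * dist (T^[j] x) (T^[j] y) :=
        fun j _ => mul_nonneg (Real.rpow_nonneg hq0.le _) dist_nonneg
      have h0 := (Finset.sum_eq_zero_iff_of_nonneg hnn).1 h 0 (Finset.mem_range.2 hk)
      simpa using h0
    · rintro rfl
      simp [bieleckiDist]
  · intro x y
    unfold bieleckiDist
    simp [dist_comm]
  · intro x y z
    unfold bieleckiDist
    rw [← Finset.sum_add_distrib]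
    refine Finset.sum_le_sum fun j _ => ?_
    rw [← mul_add]
    exact mul_le_mul_of_nonneg_left (dist_triangle _ _ _) (Real.rpow_nonneg hq0.le _)
  · intro x y
    obtain ⟨m, rfl⟩ : ∃ m, k = m + 1 := ⟨k - 1, by omega⟩
    set f : ℕ → ℝ := fun j => q ^ (-(j : ℝ) / ((m + 1 : ℕ) : ℝ)) * dist (T^[j] x) (T^[j] y)
      with hf
    have hstep : bieleckiDist T (m + 1) q (T x) (T y)
        = q ^ ((1 : ℝ) / ((m + 1 : ℕ) : ℝ)) * ∑ j ∈ Finset.range (m + 1), f (j + 1) := by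
      unfold bieleckiDist
      rw [Finset.mul_sum]
      refine Finset.sum_congr rfl fun j _ => ?_
      rw [hf]
      simp only [← Function.iterate_succ_apply]
      rw [← mul_assoc, ← Real.rpow_add hq0]
      congr 2
      push_cast
      field_simp
      ring
    rw [hstep]
    refine mul_le_mul_of_nonneg_left ?_ (Real.rpow_nonneg hq0.le _)
    rw [Finset.sum_range_succ]
    have hrhs : bieleckiDist T (m + 1) q x y
        = (∑ j ∈ Finset.range m, f (j + 1)) + f 0 := by
      unfold bieleckiDist
      rw [Finset.sum_range_succ']
    rw [hrhs]
    refine add_le_add_right ?_ _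
    -- f (m+1) ≤ f 0
    have h1 : (-(((m + 1 : ℕ) : ℝ)) / ((m + 1 : ℕ) : ℝ)) = (-1 : ℝ) := by
      field_simp
    have h0 : (-(0 : ℝ) / ((m + 1 : ℕ) : ℝ)) = (0 : ℝ) := by simp
    rw [hf]
    simp only [Nat.cast_zero, h0, Real.rpow_zero, one_mul, Function.iterate_zero_apply]
    have h1' : (-((m : ℝ) + 1) / ((m : ℝ) + 1)) = (-1 : ℝ) := by
      have hm : (m : ℝ) + 1 ≠ 0 := by positivity
      field_simp
    push_cast
    rw [h1', Real.rpow_neg_one]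
    calc q⁻¹ * dist (T^[m + 1] x) (T^[m + 1] y) ≤ q⁻¹ * (q * dist x y) :=
          mul_le_mul_of_nonneg_left (hcontr x y) (by positivity)
      _ = dist x y := by field_simp
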